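/- (Range of the second opening angle of S_norm.) Fix a direction angle δ ∈ (0, π/2). For ε ∈ [0, 1], define θ2(ε) = π/2 + arctan(ε·sin δ / ((1 − ε)/cos δ + ε·cos δ)). Then θ2(0) = π/2, θ2(1) = π/2 + δ, and for all ε ∈ [0, 1], π/2 ≤ θ2(ε) ≤ π/2 + δ; moreover ε ↦ θ2(ε) is strictly increasing on [0, 1]. -/

import Mathlib

open Real

/-- The second opening angle of `S_norm` as a function of `ε`, for direction angle `δ`. -/
noncomputable def theta2 (δ ε : ℝ) : ℝ :=
  Real.pi / 2 + Real.arctan (ε * Real.sin δ / ((1 - ε) / Real.cos δ + ε * Real.cos δ))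

/-- Range of the second opening angle of `S_norm`: `θ2(0) = π/2`, `θ2(1) = π/2 + δ`,
`π/2 ≤ θ2(ε) ≤ π/2 + δ` for all `ε ∈ [0, 1]`, and `ε ↦ θ2(ε)` is strictly increasing
on `[0, 1]`. -/
theorem snorm_theta2_range (δ : ℝ) (hδ0 : 0 < δ) (hδ1 : δ < Real.pi / 2) :
    theta2 δ 0 = Real.pi / 2 ∧
    theta2 δ 1 = Real.pi / 2 + δ ∧
    (∀ ε ∈ Set.Icc (0 : ℝ) 1,
      Real.pi / 2 ≤ theta2 δ ε ∧ theta2 δ ε ≤ Real.pi / 2 + δ) ∧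
    StrictMonoOn (theta2 δ) (Set.Icc (0 : ℝ) 1) := by
  have hc : 0 < Real.cos δ := Real.cos_pos_of_mem_Ioo ⟨by linarith [Real.pi_pos], hδ1⟩
  have hs : 0 < Real.sin δ := Real.sin_pos_of_pos_of_lt_pi hδ0 (by linarith [Real.pi_pos])
  have hpyth := Real.sin_sq_add_cos_sq δ
  have key : ∀ ε : ℝ, (1 - ε) / Real.cos δ + ε * Real.cos δ
      = (1 - ε * (Real.sin δ)^2) / Real.cos δ := by
    intro ε
    field_simp
    linear_combination ε * hpyth
  have hden : ∀ ε ∈ Set.Icc (0 : ℝ) 1, 0 < 1 - ε * (Real.sin δ)^2 := by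
    intro ε hε
    have h1 : ε * (Real.sin δ)^2 ≤ (Real.sin δ)^2 := by nlinarith [hε.2, sq_nonneg (Real.sin δ)]
    nlinarith [hpyth, sq_nonneg (Real.cos δ)]
  have keyg : ∀ ε : ℝ, ε * Real.sin δ / ((1 - ε) / Real.cos δ + ε * Real.cos δ)
      = ε * Real.sin δ * Real.cos δ / (1 - ε * (Real.sin δ)^2) := by
    intro ε
    rw [key, div_div_eq_mul_div]
  refine ⟨?_, ?_, ?_, ?_⟩
  · simp [theta2]
  · have : (1 : ℝ) * Real.sin δ / ((1 - 1) / Real.cos δ + 1 * Real.cos δ)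
        = Real.tan δ := by
      rw [Real.tan_eq_sin_div_cos]; field_simp; ring
    rw [theta2, this, Real.arctan_tan (by linarith) hδ1]
  · intro ε hε
    rw [theta2, keyg]
    have hd := hden ε hε
    constructor
    · have h0 : (0:ℝ) ≤ ε * Real.sin δ * Real.cos δ / (1 - ε * (Real.sin δ)^2) :=
        div_nonneg (mul_nonneg (mul_nonneg hε.1 hs.le) hc.le) hd.le
      have := Real.arctan_strictMono.monotone h0
      rw [Real.arctan_zero] at this
      linarith
    · have hle : ε * Real.sin δ * Real.cos δ / (1 - ε * (Real.sin δ)^2)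
          ≤ Real.sin δ / Real.cos δ := by
        rw [div_le_div_iff₀ hd hc]
        nlinarith [hε.1, hε.2, sq_nonneg (Real.sin δ)]
      have := Real.arctan_strictMono.monotone hle
      rw [← Real.tan_eq_sin_div_cos, Real.arctan_tan (by linarith) hδ1] at this
      linarith
  · intro a ha b hb hab
    rw [theta2, theta2, keyg, keyg]
    have hda := hden a ha
    have hdb := hden b hb
    have hlt : a * Real.sin δ * Real.cos δ / (1 - a * (Real.sin δ)^2)
        < b * Real.sin δ * Real.cos δ / (1 - b * (Real.sin δ)^2) := by
      rw [div_lt_div_iff₀ hda hdb]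
      nlinarith [mul_pos hs hc]
    have := Real.arctan_strictMono hlt
    linarith
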